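/- Let V be an oriented 2-dimensional real inner product space with rotation j by π/2, let T be a finite-dimensional real inner product space, and for each v ∈ V let B_v : T → W be a linear map into an inner product space W (depending linearly on v). Assume the Lagrangian condition ᵗB_v ∘ B_{jv} = ᵗB_{jv} ∘ B_v and the isometry condition ᵗB_v ∘ B_v + ᵗB_{jv} ∘ B_{jv} = Id for every unit vector v ∈ V. Then for a fixed unit vector v₁ and v = cos θ · v₁ + sin θ · j v₁, one has ᵗB_v ∘ B_v = cos 2θ · (ᵗB_{v₁} ∘ B_{v₁}) + sin 2θ · (ᵗB_{j v₁} ∘ B_{v₁}) + sin²θ · Id. -/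
import Mathlib


open LinearMap

/-- For a Lagrangian isometric family of operators `B_v` parametrized by the
unit vectors `v = cos θ • v₁ + sin θ • j v₁` of an oriented 2-plane (with `B₁ = B_{v₁}`,
`B₂ = B_{j v₁}` and `B_v = cos θ • B₁ + sin θ • B₂`, `B_{jv} = -sin θ • B₁ + cos θ • B₂`),
satisfying the Lagrangian condition `ᵗB_v ∘ B_{jv} = ᵗB_{jv} ∘ B_v` and the isometry
condition `ᵗB_v ∘ B_v + ᵗB_{jv} ∘ B_{jv} = Id` for every unit vector `v`, one has
`ᵗB_v ∘ B_v = cos 2θ • (ᵗB₁ ∘ B₁) + sin 2θ • (ᵗB₂ ∘ B₁) + sin²θ • Id`. -/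
theorem stmt0 {T W : Type*}
    [NormedAddCommGroup T] [InnerProductSpace ℝ T] [FiniteDimensional ℝ T]
    [NormedAddCommGroup W] [InnerProductSpace ℝ W] [FiniteDimensional ℝ W]
    (B₁ B₂ : T →ₗ[ℝ] W)
    (hLag : ∀ θ : ℝ,
      (adjoint (Real.cos θ • B₁ + Real.sin θ • B₂)) ∘ₗ
          ((-Real.sin θ) • B₁ + Real.cos θ • B₂)
        = (adjoint ((-Real.sin θ) • B₁ + Real.cos θ • B₂)) ∘ₗ
          (Real.cos θ • B₁ + Real.sin θ • B₂))
    (hIso : ∀ θ : ℝ,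
      (adjoint (Real.cos θ • B₁ + Real.sin θ • B₂)) ∘ₗ
          (Real.cos θ • B₁ + Real.sin θ • B₂)
        + (adjoint ((-Real.sin θ) • B₁ + Real.cos θ • B₂)) ∘ₗ
          ((-Real.sin θ) • B₁ + Real.cos θ • B₂)
        = LinearMap.id) :
    ∀ θ : ℝ,
      (adjoint (Real.cos θ • B₁ + Real.sin θ • B₂)) ∘ₗ
          (Real.cos θ • B₁ + Real.sin θ • B₂)
        = Real.cos (2 * θ) • ((adjoint B₁) ∘ₗ B₁)
          + Real.sin (2 * θ) • ((adjoint B₂) ∘ₗ B₁)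
          + (Real.sin θ) ^ 2 • (LinearMap.id : T →ₗ[ℝ] T) := by
  intro θ
  have h1 := hLag 0
  have h2 := hIso 0
  simp only [Real.cos_zero, Real.sin_zero, neg_zero, zero_smul, one_smul, add_zero,
    zero_add] at h1 h2
  have hC : adjoint B₂ ∘ₗ B₂ = LinearMap.id - adjoint B₁ ∘ₗ B₁ := by
    rw [← h2]; abel
  simp only [map_add, map_smul, map_smulₛₗ, starRingEnd_apply, star_trivial, add_comp, comp_add, smul_comp, comp_smul,
    smul_smul, Real.sin_two_mul, Real.cos_two_mul', hC, h1]
  module
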